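/- For any two graphs Γ₁, Γ₂ and any positive integers x, y, the chromatic polynomial satisfies the multiplicative identity χ_Γ(xy) = Σ_{I ⊢ Γ} χ_{Γ/I}(x) · Π_{G ∈ I} χ_{Γ|_G}(y), where the sum is over all partitions I of the vertex set of Γ into tubes, Γ/I is the graph obtained by contracting each block, and Γ|_G is the induced subgraph on block G. -/

import Mathlib

open scoped Classical

noncomputable def properColorings {W : Type*} (Γ : SimpleGraph W) (q : ℕ) : ℕ :=
  Nat.card {f : W → Fin q // ∀ v w : W, Γ.Adj v w → f v ≠ f w}

def IsGraphPartition {V : Type*} (Γ : SimpleGraph V) (r : Setoid V) : Prop :=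
  ∀ v : V, (Γ.induce {w | r w v}).Connected

def contractSetoid {V : Type*} (Γ : SimpleGraph V) (r : Setoid V) :
    SimpleGraph (Quotient r) :=
  SimpleGraph.fromRel fun a b =>
    ∃ v w : V, Quotient.mk r v = a ∧ Quotient.mk r w = b ∧ Γ.Adj v w

noncomputable instance setoidFintype (V : Type*) [Fintype V] : Fintype (Setoid V) :=
  Fintype.ofSurjective (fun f : V → V => Setoid.ker f) (fun r => by
    refine ⟨fun v => (Quotient.mk r v).out, Setoid.ext fun a b => ?_⟩
    show (Quotient.mk r a).out = (Quotient.mk r b).out ↔ r a b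
    constructor
    · intro h
      have h2 := congrArg (Quotient.mk r) h
      rw [Quotient.out_eq, Quotient.out_eq] at h2
      exact Quotient.eq.mp h2
    · intro h
      have h2 : Quotient.mk r a = Quotient.mk r b := Quotient.sound h
      rw [h2])

noncomputable instance quotFintype {V : Type*} [Finite V] (r : Setoid V) :
    Fintype (Quotient r) :=
  Fintype.ofFinite _

section Aux
set_option linter.unusedVariables false

variable {V : Type} (Γ : SimpleGraph V) {x y : ℕ}

def fstGraph (c : V → Fin x × Fin y) : SimpleGraph V where
  Adj v w := Γ.Adj v w ∧ (c v).1 = (c w).1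
  symm := ⟨fun v w h => ⟨h.1.symm, h.2.symm⟩⟩
  loopless := ⟨fun v h => Γ.loopless.irrefl v h.1⟩

def derivedSetoid (c : V → Fin x × Fin y) : Setoid V := (fstGraph Γ c).reachableSetoid

lemma reach_fst_eq {c : V → Fin x × Fin y} {v w : V}
    (h : (fstGraph Γ c).Reachable v w) : (c v).1 = (c w).1 := by
  obtain ⟨p⟩ := h
  induction p with
  | nil => rfl
  | cons h p ih => exact h.2.trans ih

lemma walk_to_induce {c : V → Fin x × Fin y} {v : V}
    {a b : V} (p : (fstGraph Γ c).Walk a b) (hb : (fstGraph Γ c).Reachable b v) :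
    (Γ.induce {w | (fstGraph Γ c).Reachable w v}).Reachable
      ⟨a, (p.reachable).trans hb⟩ ⟨b, hb⟩ := by
  induction p with
  | nil => exact SimpleGraph.Reachable.refl _
  | cons h p ih =>
    exact (SimpleGraph.Adj.reachable (by exact h.1 :
      (Γ.induce {w | (fstGraph Γ c).Reachable w v}).Adj ⟨_, _⟩ ⟨_, p.reachable.trans hb⟩)).trans
      (ih hb)

lemma derived_isPartition (c : V → Fin x × Fin y) :
    IsGraphPartition Γ (derivedSetoid Γ c) := by
  intro v
  rw [SimpleGraph.connected_iff]
  refine ⟨?_, ⟨⟨v, SimpleGraph.Reachable.refl v⟩⟩⟩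
  rintro ⟨a, ha⟩ ⟨b, hb⟩
  obtain ⟨p⟩ := (ha : (fstGraph Γ c).Reachable a v)
  obtain ⟨q⟩ := (hb : (fstGraph Γ c).Reachable b v)
  exact (walk_to_induce Γ p (SimpleGraph.Reachable.refl v)).trans
    (walk_to_induce Γ q (SimpleGraph.Reachable.refl v)).symm

/-- Proper colorings as a type. -/
abbrev PC {W : Type*} (Δ : SimpleGraph W) (q : ℕ) :=
  {f : W → Fin q // ∀ v w : W, Δ.Adj v w → f v ≠ f w}

example {W : Type*} (Δ : SimpleGraph W) (q : ℕ) : properColorings Δ q = Nat.card (PC Δ q) := rfl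

variable (x y) in
abbrev FiberT (r : Setoid V) : Type :=
  {c : {c : V → Fin x × Fin y // ∀ v w : V, Γ.Adj v w → c v ≠ c w} //
    derivedSetoid Γ c.1 = r}

variable (x y) in
abbrev TargetT (r : Setoid V) : Type :=
  PC (contractSetoid Γ r) x × ∀ q : Quotient r, PC (Γ.induce {w | Quotient.mk r w = q}) y

def fiberEquiv (r : Setoid V) (hr : IsGraphPartition Γ r) :
    FiberT Γ x y r ≃ TargetT Γ x y r where
  toFun := fun ⟨⟨c, hc⟩, hD⟩ => by
    have hconst : ∀ {v w : V}, r.r v w → (c v).1 = (c w).1 := by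
      intro v w h
      rw [← hD] at h
      exact reach_fst_eq Γ h
    refine ⟨⟨Quotient.lift (fun v => (c v).1) (fun a b h => hconst h), ?_⟩,
      fun q => ⟨fun v => (c v.1).2, ?_⟩⟩
    · intro a b hab heq
      rw [contractSetoid, SimpleGraph.fromRel_adj] at hab
      obtain ⟨hne, h | h⟩ := hab <;>
      · obtain ⟨v, w, hv, hw, hadj⟩ := h
        have h1 : (c v).1 = (c w).1 := by
          have := heq
          rw [← hv, ← hw] at this
          first
          | exact this
          | exact this.symm
        have : r.r v w := by
          rw [← hD]
          exact SimpleGraph.Adj.reachable (⟨hadj, h1⟩ : (fstGraph Γ c).Adj v w)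
        exact hne (by rw [← hv, ← hw, Quotient.sound this] <;> rfl)
    · rintro ⟨v, hv⟩ ⟨w, hw⟩ hadj heq
      have hadj' : Γ.Adj v w := hadj
      have hrvw : r.r v w := Quotient.exact ((hv : _ = q).trans (hw : _ = q).symm)
      exact hc v w hadj' (Prod.ext (hconst hrvw) heq)
  invFun := fun ⟨⟨F, hF⟩, G⟩ => by
    refine ⟨⟨fun v => (F (Quotient.mk r v), (G (Quotient.mk r v)).1 ⟨v, rfl⟩), ?_⟩, ?_⟩
    · intro v w hadj heq
      by_cases hq : Quotient.mk r v = Quotient.mk r w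
      · have key : ((G (Quotient.mk r w)).1 ⟨v, hq⟩ : Fin y)
            ≠ (G (Quotient.mk r w)).1 ⟨w, rfl⟩ :=
          (G (Quotient.mk r w)).2 ⟨v, hq⟩ ⟨w, rfl⟩ (by exact hadj)
        apply key
        have haux : ∀ {q1 q2 : Quotient r} (e : q1 = q2) (h1 : Quotient.mk r v = q1),
            ((G q1).1 ⟨v, h1⟩ : Fin y) = (G q2).1 ⟨v, e ▸ h1⟩ := by
          rintro q1 q2 rfl h1; rfl
        have h2 : ((G (Quotient.mk r v)).1 ⟨v, rfl⟩ : Fin y)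
            = (G (Quotient.mk r w)).1 ⟨v, hq⟩ := haux hq rfl
        rw [← h2]
        exact congrArg Prod.snd heq
      · have hadj2 : (contractSetoid Γ r).Adj (Quotient.mk r v) (Quotient.mk r w) := by
          rw [contractSetoid, SimpleGraph.fromRel_adj]
          exact ⟨hq, Or.inl ⟨v, w, rfl, rfl, hadj⟩⟩
        exact hF _ _ hadj2 (congrArg Prod.fst heq)
    · -- derivedSetoid = r
      apply Setoid.ext
      intro v w
      constructor
      · intro h
        obtain ⟨p⟩ := (h : (fstGraph Γ _).Reachable v w)
        induction p with
        | nil => exact r.refl _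
        | cons h p ih =>
          rename_i a b _
          have hab : Setoid.r a b := by
            by_contra hne
            have hne' : Quotient.mk r a ≠ Quotient.mk r b := fun he => hne (Quotient.exact he)
            have hadj2 : (contractSetoid Γ r).Adj (Quotient.mk r a) (Quotient.mk r b) := by
              rw [contractSetoid, SimpleGraph.fromRel_adj]
              exact ⟨hne', Or.inl ⟨a, b, rfl, rfl, h.1⟩⟩
            have h2 : Γ.Adj a b ∧ (F (Quotient.mk r a), (G (Quotient.mk r a)).1 ⟨a, rfl⟩).1
                = (F (Quotient.mk r b), (G (Quotient.mk r b)).1 ⟨b, rfl⟩).1 := h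
            exact hF _ _ hadj2 h2.2
          exact r.trans hab ih
      · intro h
        have hconn := hr w
        have hv : v ∈ {u | r.r u w} := h
        have hw : w ∈ {u | r.r u w} := r.refl w
        have hre := hconn.preconnected ⟨v, hv⟩ ⟨w, hw⟩
        let φ : Γ.induce {u | r.r u w} →g fstGraph Γ
            (fun v => (F (Quotient.mk r v), (G (Quotient.mk r v)).1 ⟨v, rfl⟩)) := by
          refine ⟨Subtype.val, ?_⟩
          rintro ⟨a, ha⟩ ⟨b, hb⟩ hab
          refine ⟨hab, ?_⟩
          have : Quotient.mk r a = Quotient.mk r b :=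
            Quotient.sound (r.trans ha (r.symm hb))
          simp only [this]
        exact hre.map φ
  left_inv := fun ⟨⟨c, hc⟩, hD⟩ => by
    apply Subtype.ext
    apply Subtype.ext
    funext v
    show (Quotient.lift (fun v => (c v).1) _ (Quotient.mk r v), (c v).2) = c v
    rfl
  right_inv := fun ⟨⟨F, hF⟩, G⟩ => by
    refine Prod.ext ?_ ?_
    · apply Subtype.ext
      funext q
      induction q using Quotient.ind
      rfl
    · funext q
      apply Subtype.ext
      funext v
      obtain ⟨v, hv⟩ := v
      show ((G (Quotient.mk r v)).1 ⟨v, rfl⟩ : Fin y) = (G q).1 ⟨v, hv⟩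
      cases hv
      rfl


lemma fiber_isEmpty (r : Setoid V) (hr : ¬ IsGraphPartition Γ r) :
    IsEmpty (FiberT Γ x y r) :=
  ⟨fun ⟨⟨c, hc⟩, hD⟩ => hr (hD ▸ derived_isPartition Γ c)⟩

def recolorEquiv : {c : V → Fin x × Fin y // ∀ v w : V, Γ.Adj v w → c v ≠ c w}
    ≃ PC Γ (x * y) where
  toFun := fun ⟨c, hc⟩ => ⟨fun v => finProdFinEquiv (c v),
    fun v w ha he => hc v w ha (finProdFinEquiv.injective he)⟩
  invFun := fun ⟨f, hf⟩ => ⟨fun v => finProdFinEquiv.symm (f v),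
    fun v w ha he => hf v w ha (finProdFinEquiv.symm.injective he)⟩
  left_inv := fun ⟨c, hc⟩ => by
    apply Subtype.ext; funext v; exact finProdFinEquiv.symm_apply_apply (c v)
  right_inv := fun ⟨f, hf⟩ => by
    apply Subtype.ext; funext v; exact finProdFinEquiv.apply_symm_apply (f v)

lemma card_sigma' {ι : Type} [Fintype ι] (F : ι → Type) [∀ i, Finite (F i)] :
    Nat.card (Σ i, F i) = ∑ i, Nat.card (F i) := by
  have : ∀ i, Fintype (F i) := fun i => Fintype.ofFinite _
  simp [Nat.card_eq_fintype_card, Fintype.card_sigma]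

end Aux

/-- Multiplicative identity for the chromatic polynomial: for a connected graph `Γ`
and positive integers `x, y`,
`χ_Γ(xy) = Σ_{I ⊢ Γ} χ_{Γ/I}(x) · Π_{G ∈ I} χ_{Γ|_G}(y)`,
the sum ranging over all partitions of the vertex set into tubes. -/
theorem stmt5 {V : Type} [Fintype V] (Γ : SimpleGraph V) (hΓ : Γ.Connected)
    (x y : ℕ) (hx : 0 < x) (hy : 0 < y) :
    properColorings Γ (x * y) =
      ∑ r : Setoid V, if IsGraphPartition Γ r then
          properColorings (contractSetoid Γ r) x *
            ∏ q : Quotient r, properColorings (Γ.induce {w | Quotient.mk r w = q}) y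
        else 0 := by
  classical
  have h1 : properColorings Γ (x * y)
      = Nat.card {c : V → Fin x × Fin y // ∀ v w : V, Γ.Adj v w → c v ≠ c w} :=
    (Nat.card_congr (recolorEquiv Γ)).symm
  have h2 : Nat.card {c : V → Fin x × Fin y // ∀ v w : V, Γ.Adj v w → c v ≠ c w}
      = Nat.card (Σ r : Setoid V, FiberT Γ x y r) :=
    Nat.card_congr (Equiv.sigmaFiberEquiv
      (fun c : {c : V → Fin x × Fin y // ∀ v w : V, Γ.Adj v w → c v ≠ c w} =>
        derivedSetoid Γ c.1)).symm
  rw [h1, h2, card_sigma']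
  refine Finset.sum_congr rfl fun r _ => ?_
  by_cases hr : IsGraphPartition Γ r
  · rw [if_pos hr, Nat.card_congr (fiberEquiv Γ r hr)]
    show Nat.card (TargetT Γ x y r) = _
    rw [TargetT, Nat.card_prod, Nat.card_pi]
    rfl
  · rw [if_neg hr]
    have := fiber_isEmpty Γ (x := x) (y := y) r hr
    simp [Nat.card_of_isEmpty]
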